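/- Let q be a landmark of a STRIPS planning problem P that does not hold in the initial state. If there exists an atom p such that every action a with q ∈ eff⁺_a satisfies p ∈ pre_a, then p is also a landmark of P. Moreover, in every solution plan, p holds in some state strictly before the first state in which q holds (a greedy necessary ordering p →_gn q restricted to this setting). -/

import Mathlib

structure Act (Atom : Type*) where
  pre : Set Atom
  addEff : Set Atom
  delEff : Set Atom

structure Prob (Atom : Type*) where
  I : Set Atom
  G : Set Atom
  acts : Set (Act Atom)

/-- STRIPS successor state: s' = (s \ eff⁻) ∪ eff⁺. -/
def stripsSucc {Atom : Type*} (s : Set Atom) (a : Act Atom) : Set Atom :=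
  (s \ a.delEff) ∪ a.addEff

/-- Each action in the plan is applicable in the state where it is applied. -/
def validFrom {Atom : Type*} (s : Set Atom) : List (Act Atom) → Prop
  | [] => True
  | a :: rest => a.pre ⊆ s ∧ validFrom (stripsSucc s a) rest

/-- A plan solves P iff its actions belong to P, are applicable along the way,
and the goal holds in the final state. -/
def Solves {Atom : Type*} (P : Prob Atom) (π : List (Act Atom)) : Prop :=
  (∀ a ∈ π, a ∈ P.acts) ∧ validFrom P.I π ∧ P.G ⊆ π.foldl stripsSucc P.I

/-- The trajectory of states induced by executing plan π from the initial state. -/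
def traj {Atom : Type*} (P : Prob Atom) (π : List (Act Atom)) : List (Set Atom) :=
  List.scanl stripsSucc P.I π

/-- An atom is a landmark iff it holds in some state of every solution trajectory. -/
def IsLandmark {Atom : Type*} (P : Prob Atom) (p : Atom) : Prop :=
  ∀ π, Solves P π → ∃ s ∈ traj P π, p ∈ s


lemma key {Atom : Type*} (P : Prob Atom) (q p : Atom)
    (hpre : ∀ a ∈ P.acts, q ∈ a.addEff → p ∈ a.pre) :
    ∀ (π : List (Act Atom)) (s : Set Atom), validFrom s π → (∀ a ∈ π, a ∈ P.acts) →
      q ∉ s →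
      ∀ i, i < (List.scanl stripsSucc s π).length →
        q ∈ (List.scanl stripsSucc s π).getD i ∅ →
        (∀ k < i, q ∉ (List.scanl stripsSucc s π).getD k ∅) →
        ∃ j < i, p ∈ (List.scanl stripsSucc s π).getD j ∅ := by
  intro π
  induction π with
  | nil =>
    intro s _ _ hqs i hi hqi _
    simp [List.scanl] at hi
    obtain rfl : i = 0 := by omega
    simp [List.scanl] at hqi
    exact absurd hqi hqs
  | cons a rest ih =>
    intro s hv hacts hqs i hi hqi hk
    rw [List.scanl_cons] at *
    match i with
    | 0 => simp at hqi; exact absurd hqi hqs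
    | (i' + 1) =>
      simp only [List.getD_cons_succ] at hqi
      by_cases hq1 : q ∈ stripsSucc s a
      · -- first occurrence must be at i' + 1 = 1
        have hi1 : i' = 0 := by
          by_contra h
          have : q ∉ (List.scanl stripsSucc s (a :: rest)).getD 1 ∅ :=
            by rw [List.scanl_cons]; exact hk 1 (by omega)
          cases rest <;> simp [List.scanl] at this <;> exact this hq1
        subst hi1
        have hqa : q ∈ a.addEff := by
          rcases hq1 with h | h
          · exact absurd h.1 hqs
          · exact h
        have hp : p ∈ a.pre := hpre a (hacts a (by simp)) hqa
        exact ⟨0, by omega, hv.1 hp⟩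
      · have hk' : ∀ k < i', q ∉ (List.scanl stripsSucc (stripsSucc s a) rest).getD k ∅ := by
          intro k hki
          have := hk (k + 1) (by omega)
          simpa using this
        obtain ⟨j, hj, hpj⟩ := ih (stripsSucc s a) hv.2
          (fun b hb => hacts b (by simp [hb])) hq1 i'
          (by simpa [List.scanl] using hi) hqi hk'
        exact ⟨j + 1, by omega, by simpa using hpj⟩

/-- LAMA back-chaining rule: if q is a landmark not holding initially and every
action adding q has p as a precondition, then p is a landmark, and in every
solution plan p holds strictly before the first state where q holds. -/
theorem shared_precondition_is_landmark {Atom : Type*} (P : Prob Atom) (q p : Atom)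
    (hq : IsLandmark P q) (hq0 : q ∉ P.I)
    (hpre : ∀ a ∈ P.acts, q ∈ a.addEff → p ∈ a.pre) :
    IsLandmark P p ∧
      ∀ π, Solves P π →
        ∀ i, i < (traj P π).length → q ∈ (traj P π).getD i ∅ →
          (∀ k < i, q ∉ (traj P π).getD k ∅) →
          ∃ j < i, p ∈ (traj P π).getD j ∅ := by
  have main : ∀ π, Solves P π →
      ∀ i, i < (traj P π).length → q ∈ (traj P π).getD i ∅ →
        (∀ k < i, q ∉ (traj P π).getD k ∅) →
        ∃ j < i, p ∈ (traj P π).getD j ∅ := by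
    intro π hsol i hi hqi hk
    exact key P q p hpre π P.I hsol.2.1 hsol.1 hq0 i hi hqi hk
  refine ⟨?_, main⟩
  intro π hsol
  obtain ⟨s, hs, hqs⟩ := hq π hsol
  obtain ⟨i, hi, rfl⟩ := List.getElem_of_mem hs
  have hex : ∃ n, n < (traj P π).length ∧ q ∈ (traj P π).getD n ∅ := by
    exact ⟨i, hi, by rw [List.getD_eq_getElem _ _ hi]; exact hqs⟩
  classical
  obtain ⟨⟨hm1, hm2⟩, hmin⟩ := Nat.find_spec hex, fun k hk => Nat.find_min hex hk
  obtain ⟨j, hj, hpj⟩ := main π hsol (Nat.find hex) hm1 hm2 (by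
    intro k hk hqk
    exact Nat.find_min hex hk ⟨lt_trans hk hm1, hqk⟩)
  have hjlen : j < (traj P π).length := lt_trans hj hm1
  refine ⟨(traj P π)[j], List.getElem_mem hjlen, ?_⟩
  rwa [List.getD_eq_getElem _ _ hjlen] at hpj
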